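/- The set Δ of all 1/2-derivations of the Witt algebra W is closed under composition, composition of 1/2-derivations of W is commutative, and Δ, with pointwise addition and scalar multiplication and composition as product, is an associative commutative complex algebra isomorphic to the Laurent polynomial algebra ℒ (the isomorphism sends the class of e_k to the map e_i ↦ e_{i+k}). -/

import Mathlib

/-- The Witt algebra bracket on the space `ℤ →₀ ℂ` with basis `e i = single i 1`,
given by `[e i, e j] = (i - j) e (i+j)`. -/
noncomputable def wittBracket (f g : ℤ →₀ ℂ) : ℤ →₀ ℂ :=
  f.sum fun i a => g.sum fun j b =>
    (a * b * ((i : ℂ) - (j : ℂ))) • Finsupp.single (i + j) (1 : ℂ)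

/-- A 1/2-derivation of the Witt algebra, as an endomorphism of `ℤ →₀ ℂ`. -/
def IsHalfDerWitt (φ : Module.End ℂ (ℤ →₀ ℂ)) : Prop :=
  ∀ x y : ℤ →₀ ℂ, φ (wittBracket x y) =
    (1 / 2 : ℂ) • (wittBracket (φ x) y + wittBracket x (φ y))

namespace WittAux

noncomputable def Bs (i : ℤ) : (ℤ →₀ ℂ) →ₗ[ℂ] (ℤ →₀ ℂ) :=
  Finsupp.lsum ℂ fun j => LinearMap.toSpanSingleton ℂ _
    (((i : ℂ) - (j : ℂ)) • Finsupp.single (i + j) (1 : ℂ))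

lemma Bs_apply (i : ℤ) (g : ℤ →₀ ℂ) :
    Bs i g = g.sum fun j b => (b * ((i:ℂ) - (j:ℂ))) • Finsupp.single (i + j) (1:ℂ) := by
  unfold Bs
  rw [Finsupp.lsum_apply]
  refine Finsupp.sum_congr fun j _ => ?_
  rw [LinearMap.toSpanSingleton_apply, smul_smul]

noncomputable def B : (ℤ →₀ ℂ) →ₗ[ℂ] (ℤ →₀ ℂ) →ₗ[ℂ] (ℤ →₀ ℂ) :=
  Finsupp.lsum ℂ fun i => LinearMap.toSpanSingleton ℂ _ (Bs i)

lemma B_apply (f g : ℤ →₀ ℂ) : B f g = f.sum fun i a => a • Bs i g := by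
  unfold B
  rw [Finsupp.lsum_apply]
  simp only [Finsupp.sum, LinearMap.sum_apply]
  refine Finset.sum_congr rfl fun i _ => ?_
  rw [LinearMap.toSpanSingleton_apply, LinearMap.smul_apply]

lemma wittBracket_eq (f g : ℤ →₀ ℂ) : wittBracket f g = B f g := by
  rw [B_apply]
  unfold wittBracket
  refine Finsupp.sum_congr fun i _ => ?_
  rw [Bs_apply, Finsupp.smul_sum]
  refine Finsupp.sum_congr fun j _ => ?_
  rw [smul_smul]
  ring_nf

lemma B_single_single (i j : ℤ) :
    B (Finsupp.single i (1:ℂ)) (Finsupp.single j (1:ℂ))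
      = ((i:ℂ) - (j:ℂ)) • Finsupp.single (i + j) (1:ℂ) := by
  rw [B_apply, Finsupp.sum_single_index (by simp), Bs_apply,
    Finsupp.sum_single_index (by simp), one_smul, one_mul]

lemma B_single_right (f : ℤ →₀ ℂ) (j m : ℤ) :
    (B f (Finsupp.single j (1:ℂ))) m = f (m - j) * (((m - j : ℤ):ℂ) - (j:ℂ)) := by
  have hBs : ∀ i : ℤ, Bs i (Finsupp.single j (1:ℂ))
      = ((i:ℂ) - (j:ℂ)) • Finsupp.single (i+j) (1:ℂ) := fun i => by
    rw [Bs_apply, Finsupp.sum_single_index (by simp), one_mul]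
  rw [B_apply, Finsupp.sum_apply, Finsupp.sum]
  have key : ∀ i ∈ f.support,
      ((f i • Bs i (Finsupp.single j (1:ℂ))) m : ℂ)
        = if i = m - j then f i * ((i:ℂ) - (j:ℂ)) else 0 := by
    intro i _
    rw [hBs, smul_smul, Finsupp.smul_apply, Finsupp.single_apply, smul_eq_mul]
    by_cases h : i = m - j
    · rw [if_pos (by omega), if_pos h, mul_one]
    · rw [if_neg (by omega), if_neg h, mul_zero]
  rw [Finset.sum_congr rfl key, Finset.sum_ite_eq' f.support (m - j)
    (fun i => f i * ((i:ℂ) - (j:ℂ)))]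
  by_cases h : m - j ∈ f.support
  · rw [if_pos h]
  · rw [if_neg h, Finsupp.notMem_support_iff.mp h, zero_mul]

lemma B_single_left (g : ℤ →₀ ℂ) (i m : ℤ) :
    (B (Finsupp.single i (1:ℂ)) g) m = ((i:ℂ) - ((m - i : ℤ):ℂ)) * g (m - i) := by
  rw [B_apply, Finsupp.sum_single_index (by simp), one_smul, Bs_apply, Finsupp.sum_apply,
    Finsupp.sum]
  have key : ∀ j ∈ g.support,
      (((g j * ((i:ℂ) - (j:ℂ))) • Finsupp.single (i+j) (1:ℂ)) m : ℂ)
        = if j = m - i then ((i:ℂ) - (j:ℂ)) * g j else 0 := by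
    intro j _
    rw [Finsupp.smul_apply, Finsupp.single_apply, smul_eq_mul]
    by_cases h : j = m - i
    · rw [if_pos (by omega), if_pos h, mul_one, mul_comm]
    · rw [if_neg (by omega), if_neg h, mul_zero]
  rw [Finset.sum_congr rfl key, Finset.sum_ite_eq' g.support (m - i)
    (fun j => ((i:ℂ) - (j:ℂ)) * g j)]
  by_cases h : m - i ∈ g.support
  · rw [if_pos h]
  · rw [if_neg h, Finsupp.notMem_support_iff.mp h, mul_zero]

lemma halfDer_iff (φ : Module.End ℂ (ℤ →₀ ℂ)) :
    IsHalfDerWitt φ ↔ ∀ i j : ℤ,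
      φ (B (Finsupp.single i 1) (Finsupp.single j 1))
        = (1 / 2 : ℂ) • (B (φ (Finsupp.single i 1)) (Finsupp.single j 1)
            + B (Finsupp.single i 1) (φ (Finsupp.single j 1))) := by
  constructor
  · intro h i j
    have := h (Finsupp.single i 1) (Finsupp.single j 1)
    rwa [wittBracket_eq, wittBracket_eq, wittBracket_eq] at this
  · intro h
    have key : B.compr₂ φ = (1 / 2 : ℂ) • (B.comp φ + B.compl₂ φ) := by
      refine Finsupp.lhom_ext' fun i =>
        LinearMap.ext_ring (Finsupp.lhom_ext' fun j => LinearMap.ext_ring ?_)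
      simpa using h i j
    intro x y
    have := LinearMap.congr_fun (LinearMap.congr_fun key x) y
    simpa [wittBracket_eq, LinearMap.compr₂_apply, LinearMap.compl₂_apply] using this

noncomputable def Sh (k : ℤ) : Module.End ℂ (ℤ →₀ ℂ) :=
  Finsupp.lmapDomain ℂ ℂ (fun i : ℤ => i + k)

lemma Sh_single (k n : ℤ) (c : ℂ) : Sh k (Finsupp.single n c) = Finsupp.single (n + k) c := by
  unfold Sh
  rw [Finsupp.lmapDomain_apply, Finsupp.mapDomain_single]

lemma halfDer_Sh (k : ℤ) : IsHalfDerWitt (Sh k) := by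
  rw [halfDer_iff]
  intro i j
  rw [B_single_single, map_smul, Sh_single, Sh_single, Sh_single, B_single_single,
    B_single_single]
  rw [show (i + k) + j = (i + j) + k by ring, show i + (j + k) = (i + j) + k by ring]
  push_cast
  module

lemma halfDer_zero : IsHalfDerWitt 0 := by
  intro x y
  simp [wittBracket_eq]

lemma halfDer_add {φ ψ : Module.End ℂ (ℤ →₀ ℂ)} (hφ : IsHalfDerWitt φ)
    (hψ : IsHalfDerWitt ψ) : IsHalfDerWitt (φ + ψ) := by
  intro x y
  have h1 := hφ x y
  have h2 := hψ x y
  simp only [wittBracket_eq] at h1 h2 ⊢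
  simp only [LinearMap.add_apply, map_add, h1, h2]
  module

lemma halfDer_smul (c : ℂ) {φ : Module.End ℂ (ℤ →₀ ℂ)} (hφ : IsHalfDerWitt φ) :
    IsHalfDerWitt (c • φ) := by
  intro x y
  have h1 := hφ x y
  simp only [wittBracket_eq] at h1 ⊢
  simp only [LinearMap.smul_apply, map_smul, h1]
  module

noncomputable def shHom : Multiplicative ℤ →* Module.End ℂ (ℤ →₀ ℂ) where
  toFun k := Sh (Multiplicative.toAdd k)
  map_one' := by
    refine Finsupp.lhom_ext fun n c => ?_
    rw [Sh_single]
    simp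
  map_mul' x y := by
    refine Finsupp.lhom_ext fun n c => ?_
    rw [Module.End.mul_apply, Sh_single, Sh_single, Sh_single]
    rw [show n + Multiplicative.toAdd (x * y)
      = n + Multiplicative.toAdd y + Multiplicative.toAdd x by
        rw [toAdd_mul]; ring]

noncomputable def F : LaurentPolynomial ℂ →ₐ[ℂ] Module.End ℂ (ℤ →₀ ℂ) :=
  AddMonoidAlgebra.lift ℂ (Module.End ℂ (ℤ →₀ ℂ)) ℤ shHom

lemma F_single (k : ℤ) (c : ℂ) : F (AddMonoidAlgebra.single k c) = c • Sh k := by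
  unfold F
  rw [AddMonoidAlgebra.lift_single]
  rfl

lemma F_T (k : ℤ) : F (LaurentPolynomial.T k) = Sh k := by
  rw [show LaurentPolynomial.T k = AddMonoidAlgebra.single k (1:ℂ) from rfl, F_single, one_smul]

lemma F_apply_basis (p : LaurentPolynomial ℂ) (i : ℤ) :
    F p (Finsupp.single i (1:ℂ)) = p.coeff.sum fun k c => Finsupp.single (i + k) c := by
  induction p using AddMonoidAlgebra.induction_linear with
  | zero => simp
  | add f g hf hg =>
    rw [map_add, LinearMap.add_apply, hf, hg, AddMonoidAlgebra.coeff_add,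
      Finsupp.sum_add_index' (fun k => Finsupp.single_zero _)
        (fun k b1 b2 => Finsupp.single_add _ _ _)]
  | single k c =>
    rw [F_single, LinearMap.smul_apply, Sh_single, AddMonoidAlgebra.coeff_single,
      Finsupp.sum_single_index (by simp), Finsupp.smul_single, smul_eq_mul, mul_one]

lemma F_coeff (p : LaurentPolynomial ℂ) (i m : ℤ) :
    F p (Finsupp.single i (1:ℂ)) m = p.coeff (m - i) := by
  rw [F_apply_basis, Finsupp.sum_apply, Finsupp.sum]
  have key : ∀ k ∈ p.coeff.support,
      (Finsupp.single (i + k) (p.coeff k) m : ℂ) = if k = m - i then p.coeff k else 0 := by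
    intro k _
    rw [Finsupp.single_apply]
    by_cases h : k = m - i
    · rw [if_pos (by omega), if_pos h]
    · rw [if_neg (by omega), if_neg h]
  rw [Finset.sum_congr rfl key, Finset.sum_ite_eq' p.coeff.support (m - i) (fun k => p.coeff k)]
  by_cases h : m - i ∈ p.coeff.support
  · rw [if_pos h]
  · rw [if_neg h, Finsupp.notMem_support_iff.mp h]

lemma F_injective : Function.Injective F := by
  intro p q h
  have hp : ∀ r : LaurentPolynomial ℂ, F r (Finsupp.single 0 (1:ℂ)) = r.coeff := by
    intro r
    ext m
    rw [F_coeff, sub_zero]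
  exact AddMonoidAlgebra.coeff_injective (by rw [← hp p, ← hp q, h])

lemma halfDer_F (p : LaurentPolynomial ℂ) : IsHalfDerWitt (F p) := by
  induction p using AddMonoidAlgebra.induction_linear with
  | zero => rw [map_zero]; exact halfDer_zero
  | add f g hf hg => rw [map_add]; exact halfDer_add hf hg
  | single k c => rw [F_single]; exact halfDer_smul c (halfDer_Sh k)

set_option linter.unusedTactic false in
lemma shift_eq (a : ℤ → ℤ → ℂ)
    (rel : ∀ i j m : ℤ, ((i:ℂ) - (j:ℂ)) * a (i+j) m
      = (1/2) * (a i (m - j) * (((m - j : ℤ):ℂ) - (j:ℂ))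
          + ((i:ℂ) - ((m - i : ℤ):ℂ)) * a j (m - i))) :
    ∀ i m : ℤ, a i m = a 0 (m - i) := by
  have step1 : ∀ i m : ℤ, 2*i ≠ m → a i m = a 0 (m - i) := by
    intro i m hne
    have h := rel i 0 m
    rw [add_zero, sub_zero] at h
    push_cast at h
    have h2 : ((2*i - m : ℤ):ℂ) * (a i m - a 0 (m - i)) = 0 := by
      push_cast
      linear_combination 2 * h
    have h3 : ((2*i - m : ℤ):ℂ) ≠ 0 := Int.cast_ne_zero.mpr (by omega)
    exact sub_eq_zero.mp ((mul_eq_zero.mp h2).resolve_left h3)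
  have step2 : ∀ i : ℤ, a i (2*i) = a 0 i := by
    intro i
    by_cases h1 : i = -1
    · subst h1
      have h := rel (-2) 1 (-2)
      have e1 := step1 (-2) (-3) (by norm_num)
      have e2 := step1 1 0 (by norm_num)
      norm_num at h e1 e2 ⊢
      rw [e1, e2] at h
      push_cast at h
      linear_combination (-1/3 : ℂ) * h
    by_cases h2 : i = -2
    · subst h2
      have h := rel 1 (-3) (-4)
      have e1 := step1 1 (-1) (by norm_num)
      have e2 := step1 (-3) (-5) (by norm_num)
      norm_num at h e1 e2 ⊢
      rw [e1, e2] at h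
      push_cast at h
      linear_combination (1/4 : ℂ) * h
    · have h := rel (i+1) (-1) (2*i)
      have e1 : a (i+1) (2*i - (-1)) = a 0 i := by
        have := step1 (i+1) (2*i - (-1)) (by omega)
        rwa [show 2*i - (-1) - (i+1) = i by ring] at this
      have e2 : a (-1) (2*i - (i+1)) = a 0 i := by
        have := step1 (-1) (2*i - (i+1)) (by omega)
        rwa [show 2*i - (i+1) - (-1) = i by ring] at this
      rw [show i + 1 + (-1) = i by ring, e1, e2] at h
      push_cast at h
      have hz : ((i:ℂ) + 2) ≠ 0 := by
        intro hz
        have h6 : ((i + 2 : ℤ):ℂ) = 0 := by push_cast; linear_combination hz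
        have h5 : (i + 2 : ℤ) = 0 := by exact_mod_cast h6
        omega
      have h4 : ((i:ℂ) + 2) * (a i (2*i) - a 0 i) = 0 := by
        linear_combination h
      exact sub_eq_zero.mp ((mul_eq_zero.mp h4).resolve_left hz)
  intro i m
  by_cases hc : 2*i = m
  · rw [← hc, show 2*i - i = i by ring]
    exact step2 i
  · exact step1 i m hc

lemma coeff_rel (φ : Module.End ℂ (ℤ →₀ ℂ)) (hφ : IsHalfDerWitt φ) (i j m : ℤ) :
    ((i:ℂ) - (j:ℂ)) * φ (Finsupp.single (i+j) 1) m
      = (1/2) * (φ (Finsupp.single i 1) (m - j) * (((m - j : ℤ):ℂ) - (j:ℂ))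
          + ((i:ℂ) - ((m - i : ℤ):ℂ)) * φ (Finsupp.single j 1) (m - i)) := by
  have h := (halfDer_iff φ).mp hφ i j
  rw [B_single_single, map_smul] at h
  have h2 := DFunLike.congr_fun h m
  simp only [Finsupp.smul_apply, Finsupp.add_apply, smul_eq_mul] at h2
  rw [B_single_right, B_single_left] at h2
  simpa using h2

lemma eq_F_of_halfDer (φ : Module.End ℂ (ℤ →₀ ℂ)) (hφ : IsHalfDerWitt φ) :
    φ = F (AddMonoidAlgebra.ofCoeff (φ (Finsupp.single 0 1))) := by
  have key := shift_eq (fun i m => φ (Finsupp.single i 1) m) (coeff_rel φ hφ)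
  symm
  refine Finsupp.lhom_ext fun i c => ?_
  have hc : (Finsupp.single i c : ℤ →₀ ℂ) = c • Finsupp.single i 1 := by
    rw [Finsupp.smul_single, smul_eq_mul, mul_one]
  rw [hc, map_smul, map_smul]
  congr 1
  ext m
  rw [F_coeff]
  exact (key i m).symm

lemma range_F (φ : Module.End ℂ (ℤ →₀ ℂ)) : φ ∈ Set.range F ↔ IsHalfDerWitt φ := by
  constructor
  · rintro ⟨p, rfl⟩
    exact halfDer_F p
  · intro hφ
    exact ⟨AddMonoidAlgebra.ofCoeff (φ (Finsupp.single 0 1)), (eq_F_of_halfDer φ hφ).symm⟩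

end WittAux

/-- The 1/2-derivations of the Witt algebra are closed under
composition, commute with each other under composition, and form (with the
pointwise module structure and composition) a commutative associative complex
algebra isomorphic to the Laurent polynomial algebra, the isomorphism sending
`T k` to the shift `e i ↦ e (i+k)`. -/
theorem witt_half_derivations_algebra :
    (∀ φ ψ : Module.End ℂ (ℤ →₀ ℂ),
        IsHalfDerWitt φ → IsHalfDerWitt ψ → IsHalfDerWitt (φ * ψ)) ∧
    (∀ φ ψ : Module.End ℂ (ℤ →₀ ℂ),
        IsHalfDerWitt φ → IsHalfDerWitt ψ → φ * ψ = ψ * φ) ∧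
    ∃ F : LaurentPolynomial ℂ →ₐ[ℂ] Module.End ℂ (ℤ →₀ ℂ),
      Function.Injective F ∧
      (∀ φ : Module.End ℂ (ℤ →₀ ℂ), φ ∈ Set.range F ↔ IsHalfDerWitt φ) ∧
      (∀ k : ℤ, F (LaurentPolynomial.T k) =
        Finsupp.lmapDomain ℂ ℂ (fun i : ℤ => i + k)) := by
  refine ⟨?_, ?_, WittAux.F, WittAux.F_injective, WittAux.range_F, WittAux.F_T⟩
  · intro φ ψ hφ hψ
    obtain ⟨p, rfl⟩ := (WittAux.range_F φ).mpr hφ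
    obtain ⟨q, rfl⟩ := (WittAux.range_F ψ).mpr hψ
    rw [← map_mul]
    exact WittAux.halfDer_F _
  · intro φ ψ hφ hψ
    obtain ⟨p, rfl⟩ := (WittAux.range_F φ).mpr hφ
    obtain ⟨q, rfl⟩ := (WittAux.range_F ψ).mpr hψ
    rw [← map_mul, ← map_mul, mul_comm]
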